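/- Let f be an orientation-preserving circle homeomorphism with irrational rotation number ρ whose convergent denominators are q_k. Then for each k, the iterate f^{q_k} is a closest return: for every x ∈ 𝕋 and every 0 < j < q_k, the point f^j(x) does not lie in the closed arc between x and f^{q_k}(x) not containing f^{q_{k+1}}(x). -/

import Mathlib

open Filter Topology

/-- The Gauss map `G(x) = {1/x}`. -/
noncomputable def gauss (x : ℝ) : ℝ := Int.fract x⁻¹

/-- The closed arc on the circle `ℝ/ℤ` from `a` to `b` in the positive direction. -/
def posArc (a b : AddCircle (1:ℝ)) : Set (AddCircle (1:ℝ)) :=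
  {c | ∃ s t : ℝ, 0 ≤ s ∧ s ≤ t ∧ t < 1 ∧
    ((s : ℝ) : AddCircle (1:ℝ)) = c - a ∧ ((t : ℝ) : AddCircle (1:ℝ)) = b - a}


lemma F_int {F : ℝ → ℝ} (hper : ∀ x, F (x + 1) = F x + 1) (m : ℤ) (y : ℝ) :
    F (y + m) = F y + m := by
  induction m using Int.induction_on with
  | zero => simp
  | succ i ih => 
      have := hper (y + (i:ℤ))
      push_cast at this ih ⊢
      rw [show y + ((i:ℝ) + 1) = y + i + 1 by ring, this, ih]; ring
  | pred i ih =>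
      have := hper (y + ((-(i:ℤ) - 1 : ℤ)))
      push_cast at this ih ⊢
      rw [show y + (-(i:ℝ) - 1) + 1 = y + -i by ring] at this
      linarith

lemma Fiter_int {F : ℝ → ℝ} (hper : ∀ x, F (x + 1) = F x + 1) (n : ℕ) (m : ℤ) (y : ℝ) :
    F^[n] (y + m) = F^[n] y + m := by
  induction n with
  | zero => simp
  | succ i ih => rw [Function.iterate_succ_apply', Function.iterate_succ_apply', ih, F_int hper]

lemma iter_lb {F : ℝ → ℝ} {n : ℕ} {m : ℤ} (h : ∀ y, y + (m:ℝ) ≤ F^[n] y) (i : ℕ) :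
    (i : ℝ) * m ≤ F^[n * i] 0 := by
  induction i with
  | zero => simp
  | succ i ih =>
      have : F^[n * (i+1)] 0 = F^[n] (F^[n * i] 0) := by
        rw [show n * (i+1) = n + n * i by ring, Function.iterate_add_apply]
      rw [this]
      have := h (F^[n * i] 0)
      push_cast
      nlinarith

lemma iter_ub {F : ℝ → ℝ} {n : ℕ} {m : ℤ} (h : ∀ y, F^[n] y ≤ y + (m:ℝ)) (i : ℕ) :
    F^[n * i] 0 ≤ (i : ℝ) * m := by
  induction i with
  | zero => simp
  | succ i ih =>
      have : F^[n * (i+1)] 0 = F^[n] (F^[n * i] 0) := by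
        rw [show n * (i+1) = n + n * i by ring, Function.iterate_add_apply]
      rw [this]
      have := h (F^[n * i] 0)
      push_cast
      nlinarith

lemma sub_tendsto {F : ℝ → ℝ} {ρ : ℝ}
    (hrot : Tendsto (fun n : ℕ => F^[n] 0 / n) atTop (𝓝 ρ)) {n : ℕ} (hn : 0 < n) :
    Tendsto (fun i : ℕ => F^[n * i] 0 / (n * i : ℕ)) atTop (𝓝 ρ) := by
  exact hrot.comp (tendsto_atTop_atTop_of_monotone
    (fun i j h => Nat.mul_le_mul_left _ h) (fun b => ⟨b, Nat.le_mul_of_pos_left b hn⟩))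

lemma subA {F : ℝ → ℝ} {ρ : ℝ}
    (hrot : Tendsto (fun n : ℕ => F^[n] 0 / n) atTop (𝓝 ρ)) {n : ℕ} (hn : 0 < n) {m : ℤ}
    (h : ∀ y, y + (m:ℝ) ≤ F^[n] y) : (m : ℝ) ≤ n * ρ := by
  have key : (m : ℝ) / n ≤ ρ := by
    apply le_of_tendsto_of_tendsto tendsto_const_nhds (sub_tendsto hrot hn)
    filter_upwards [eventually_ge_atTop 1] with i hi
    have hni : (0:ℝ) < (n * i : ℕ) := by positivity
    rw [div_le_div_iff₀ (by positivity) hni]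
    have hlb := iter_lb h i
    have : ((n * i : ℕ) : ℝ) = (n:ℝ) * i := by push_cast; ring
    rw [this]
    nlinarith [hlb]
  rw [div_le_iff₀ (by positivity : (0:ℝ) < n)] at key
  linarith [key]

lemma subB {F : ℝ → ℝ} {ρ : ℝ}
    (hrot : Tendsto (fun n : ℕ => F^[n] 0 / n) atTop (𝓝 ρ)) {n : ℕ} (hn : 0 < n) {m : ℤ}
    (h : ∀ y, F^[n] y ≤ y + (m:ℝ)) : (n:ℝ) * ρ ≤ m := by
  have key : ρ ≤ (m : ℝ) / n := by
    apply le_of_tendsto_of_tendsto (sub_tendsto hrot hn) tendsto_const_nhds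
    filter_upwards [eventually_ge_atTop 1] with i hi
    have hni : (0:ℝ) < ((n * i : ℕ) : ℝ) := by positivity
    rw [div_le_div_iff₀ hni (by positivity)]
    have hub := iter_ub h i
    have : ((n * i : ℕ) : ℝ) = (n:ℝ) * i := by push_cast; ring
    rw [this]
    nlinarith [hub]
  rw [le_div_iff₀ (by positivity : (0:ℝ) < n)] at key
  linarith [key]

lemma noFix {F : ℝ → ℝ} {ρ : ℝ} (hirr : Irrational ρ) (hmono : StrictMono F)
    (hper : ∀ x, F (x + 1) = F x + 1)
    (hrot : Tendsto (fun n : ℕ => F^[n] 0 / n) atTop (𝓝 ρ)) {n : ℕ} (hn : 0 < n) {m : ℤ}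
    {y₀ : ℝ} (h : F^[n] y₀ = y₀ + m) : False := by
  -- F^[n*i] y₀ = y₀ + i * m
  have hiter : ∀ i : ℕ, F^[n * i] y₀ = y₀ + (i : ℝ) * m := by
    intro i
    induction i with
    | zero => simp
    | succ i ih =>
        rw [show n * (i+1) = n + n * i by ring, Function.iterate_add_apply, ih,
          show y₀ + (i:ℝ) * m = y₀ + ((i * m : ℤ) : ℝ) by push_cast; ring,
          Fiter_int hper, h]
        push_cast; ring
  -- sandwich F^[N] 0 near y₀ + i m
  have hbound : ∀ i : ℕ, y₀ + (i:ℝ) * m - ⌊y₀⌋ - 1 ≤ F^[n*i] 0 ∧ F^[n*i] 0 ≤ y₀ + (i:ℝ)*m - ⌊y₀⌋ := by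
    intro i
    have h1 : F^[n*i] ((⌊y₀⌋ : ℝ)) ≤ F^[n*i] y₀ := ((hmono.iterate (n*i)).monotone) (Int.floor_le y₀)
    have h2 : F^[n*i] y₀ ≤ F^[n*i] ((⌊y₀⌋ : ℝ) + 1) :=
      ((hmono.iterate (n*i)).monotone) (le_of_lt (Int.lt_floor_add_one y₀))
    have e1 : F^[n*i] ((⌊y₀⌋ : ℝ)) = F^[n*i] 0 + ⌊y₀⌋ := by
      have := Fiter_int hper (n*i) ⌊y₀⌋ 0
      simpa using this
    have e2 : F^[n*i] ((⌊y₀⌋ : ℝ) + 1) = F^[n*i] 0 + ⌊y₀⌋ + 1 := by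
      have := Fiter_int hper (n*i) (⌊y₀⌋ + 1) 0
      push_cast at this
      simpa [add_assoc] using this
    rw [hiter] at h1 h2
    constructor <;> linarith [h1, h2, e1, e2]
  -- tendsto m / n
  have htend2 : Tendsto (fun i : ℕ => F^[n * i] 0 / ((n * i : ℕ) : ℝ)) atTop (𝓝 ((m:ℝ)/n)) := by
    rw [show ((m:ℝ)/n) = ((m:ℝ)/n) + 0 by ring]
    have : (fun i : ℕ => F^[n * i] 0 / ((n * i : ℕ) : ℝ))
        =ᶠ[atTop] (fun i : ℕ => (m:ℝ)/n + (F^[n*i] 0 - (i:ℝ)*m) / ((n * i : ℕ) : ℝ)) := by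
      filter_upwards [eventually_ge_atTop 1] with i hi
      have hni : ((n * i : ℕ) : ℝ) ≠ 0 := by positivity
      field_simp
      push_cast
      ring
    rw [tendsto_congr' this]
    apply Tendsto.const_add
    apply squeeze_zero_norm' (a := fun i : ℕ => (|y₀| + |(⌊y₀⌋:ℝ)| + 1) / i)
    · filter_upwards [eventually_ge_atTop 1] with i hi
      obtain ⟨hb1, hb2⟩ := hbound i
      have hni : (i:ℝ) ≤ ((n * i : ℕ) : ℝ) := by
        push_cast
        have h1 : (1:ℝ) ≤ (n:ℝ) := by exact_mod_cast hn
        have h2 : (0:ℝ) ≤ (i:ℝ) := Nat.cast_nonneg i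
        nlinarith
      have hipos : (0:ℝ) < i := by exact_mod_cast hi
      have hnipos : (0:ℝ) < ((n * i : ℕ) : ℝ) := by positivity
      rw [Real.norm_eq_abs, abs_div, abs_of_pos hnipos]
      have hnum : |F^[n*i] 0 - (i:ℝ)*m| ≤ |y₀| + |(⌊y₀⌋:ℝ)| + 1 := by
        rw [abs_le]
        constructor
        · have := neg_abs_le y₀; have := le_abs_self ((⌊y₀⌋:ℝ)); linarith
        · have := le_abs_self y₀; have := neg_abs_le ((⌊y₀⌋:ℝ)); linarith
      calc |F^[n*i] 0 - (i:ℝ)*m| / ((n * i : ℕ) : ℝ) ≤ (|y₀| + |(⌊y₀⌋:ℝ)| + 1) / ((n * i : ℕ) : ℝ) := by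
            apply div_le_div_of_nonneg_right hnum hnipos.le -- maybe wrong name
        _ ≤ (|y₀| + |(⌊y₀⌋:ℝ)| + 1) / (i:ℝ) := by
            apply div_le_div_of_nonneg_left (by positivity) hipos hni
    · exact tendsto_const_div_atTop_nhds_zero_nat _
  have := tendsto_nhds_unique (sub_tendsto hrot hn) htend2
  exact hirr ⟨(m : ℚ)/(n : ℚ), by push_cast; rw [← this]⟩

lemma trichotomy {F : ℝ → ℝ} {ρ : ℝ} (hirr : Irrational ρ) (hmono : StrictMono F)
    (hcont : Continuous F) (hper : ∀ x, F (x + 1) = F x + 1)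
    (hrot : Tendsto (fun n : ℕ => F^[n] 0 / n) atTop (𝓝 ρ)) {n : ℕ} (hn : 0 < n) (m : ℤ) :
    (∀ y, F^[n] y < y + m) ∨ (∀ y, y + (m:ℝ) < F^[n] y) := by
  by_contra hcon
  push_neg at hcon
  obtain ⟨⟨y₁, hy₁⟩, ⟨y₂, hy₂⟩⟩ := hcon
  set g : ℝ → ℝ := fun y => F^[n] y - (y + m) with hg
  have hgc : Continuous g := ((hcont.iterate n).sub (continuous_id.add continuous_const))
  have h1 : 0 ≤ g y₁ := by simp [hg]; linarith
  have h2 : g y₂ ≤ 0 := by simp [hg]; linarith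
  have : (0:ℝ) ∈ Set.uIcc (g y₂) (g y₁) := Set.mem_uIcc.2 (Or.inl ⟨h2, h1⟩)
  have := intermediate_value_uIcc (f := g) (a := y₂) (b := y₁) hgc.continuousOn this
  obtain ⟨z, _, hz⟩ := this
  have : F^[n] z = z + m := by
    have : F^[n] z - (z + m) = 0 := hz
    linarith
  exact noFix hirr hmono hper hrot hn this

lemma irr_ne {ρ : ℝ} (hirr : Irrational ρ) {n : ℕ} (hn : 0 < n) (m : ℤ) : (n:ℝ) * ρ ≠ m := by
  intro h
  exact hirr ⟨(m : ℚ)/(n : ℚ), by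
    push_cast
    field_simp
    linarith [h]⟩

lemma cmpF {F : ℝ → ℝ} {ρ : ℝ} (hirr : Irrational ρ) (hmono : StrictMono F)
    (hcont : Continuous F) (hper : ∀ x, F (x + 1) = F x + 1)
    (hrot : Tendsto (fun n : ℕ => F^[n] 0 / n) atTop (𝓝 ρ)) {n : ℕ} (hn : 0 < n) (m : ℤ)
    (y : ℝ) : (F^[n] y < y + m ↔ (n:ℝ) * ρ < m) ∧ ((y:ℝ) + m < F^[n] y ↔ (m:ℝ) < n * ρ) := by
  rcases trichotomy hirr hmono hcont hper hrot hn m with h | h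
  · have hle : (n:ℝ) * ρ ≤ m := subB hrot hn (fun z => le_of_lt (h z))
    have hlt : (n:ℝ) * ρ < m := lt_of_le_of_ne hle (irr_ne hirr hn m)
    constructor
    · exact ⟨fun _ => hlt, fun _ => h y⟩
    · constructor
      · intro hc; exact absurd (h y) (not_lt.2 (le_of_lt hc))
      · intro hc; linarith
  · have hle : (m:ℝ) ≤ n * ρ := subA hrot hn (fun z => le_of_lt (h z))
    have hlt : (m:ℝ) < n * ρ := lt_of_le_of_ne hle (fun hc => irr_ne hirr hn m hc.symm)
    constructor
    · constructor
      · intro hc; exact absurd (h y) (not_lt.2 (le_of_lt hc))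
      · intro hc; linarith
    · exact ⟨fun _ => hlt, fun _ => h y⟩

section diff
variable {F : ℝ → ℝ} {ρ : ℝ}

lemma cmp2 (hirr : Irrational ρ) (hmono : StrictMono F)
    (hcont : Continuous F) (hper : ∀ x, F (x + 1) = F x + 1)
    (hrot : Tendsto (fun n : ℕ => F^[n] 0 / n) atTop (𝓝 ρ)) (n m : ℕ) (ℓ : ℤ) (y : ℝ) :
    (F^[n] y - F^[m] y < ℓ ↔ (n:ℝ) * ρ - m * ρ < ℓ) ∧
      ((ℓ:ℝ) < F^[n] y - F^[m] y ↔ (ℓ:ℝ) < (n:ℝ) * ρ - m * ρ) := by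
  rcases lt_trichotomy n m with h | h | h
  · -- n < m : use d = m - n at basepoint F^[n] y
    have hd : 0 < m - n := Nat.sub_pos_of_lt h
    have hsplit : F^[m] y = F^[m-n] (F^[n] y) := by
      rw [← Function.iterate_add_apply, Nat.sub_add_cancel (le_of_lt h)]
    have hc := cmpF hirr hmono hcont hper hrot hd (-ℓ) (F^[n] y)
    rw [← hsplit] at hc
    have hcast : ((m - n : ℕ) : ℝ) = (m:ℝ) - n := by
      rw [Nat.cast_sub (le_of_lt h)]
    rw [hcast] at hc
    push_cast at hc
    constructor
    · constructor
      · intro hlt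
        have : (-ℓ:ℝ) < ((m:ℝ) - n) * ρ := (hc.2).1 (by linarith)
        linarith
      · intro hlt
        have : F^[n] y + (-ℓ:ℝ) < F^[m] y := (hc.2).2 (by nlinarith)
        linarith
    · constructor
      · intro hlt
        have : ((m:ℝ) - n) * ρ < (-ℓ:ℝ) := (hc.1).1 (by linarith)
        linarith
      · intro hlt
        have : F^[m] y < F^[n] y + (-ℓ:ℝ) := (hc.1).2 (by nlinarith)
        linarith
  · subst h
    simp
  · have hd : 0 < n - m := Nat.sub_pos_of_lt h
    have hsplit : F^[n] y = F^[n-m] (F^[m] y) := by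
      rw [← Function.iterate_add_apply, Nat.sub_add_cancel (le_of_lt h)]
    have hc := cmpF hirr hmono hcont hper hrot hd ℓ (F^[m] y)
    rw [← hsplit] at hc
    have hcast : ((n - m : ℕ) : ℝ) = (n:ℝ) - m := by
      rw [Nat.cast_sub (le_of_lt h)]
    rw [hcast] at hc
    constructor
    · constructor
      · intro hlt
        have : ((n:ℝ) - m) * ρ < ℓ := (hc.1).1 (by linarith)
        nlinarith
      · intro hlt
        have : F^[n] y < F^[m] y + (ℓ:ℝ) := (hc.1).2 (by nlinarith)
        linarith
    · constructor
      · intro hlt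
        have : (ℓ:ℝ) < ((n:ℝ) - m) * ρ := (hc.2).1 (by linarith)
        nlinarith
      · intro hlt
        have : F^[m] y + (ℓ:ℝ) < F^[n] y := (hc.2).2 (by nlinarith)
        linarith

lemma diff_ne_int (hirr : Irrational ρ) (hmono : StrictMono F)
    (hper : ∀ x, F (x + 1) = F x + 1)
    (hrot : Tendsto (fun n : ℕ => F^[n] 0 / n) atTop (𝓝 ρ)) {n m : ℕ} (hnm : n ≠ m) (ℓ : ℤ)
    (y : ℝ) : F^[n] y - F^[m] y ≠ ℓ := by
  intro hc
  rcases lt_or_gt_of_ne hnm with h | h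
  · have hd : 0 < m - n := Nat.sub_pos_of_lt h
    have hsplit : F^[m] y = F^[m-n] (F^[n] y) := by
      rw [← Function.iterate_add_apply, Nat.sub_add_cancel (le_of_lt h)]
    apply noFix hirr hmono hper hrot hd (m := -ℓ) (y₀ := F^[n] y)
    rw [← hsplit]
    push_cast
    linarith
  · have hd : 0 < n - m := Nat.sub_pos_of_lt h
    have hsplit : F^[n] y = F^[n-m] (F^[m] y) := by
      rw [← Function.iterate_add_apply, Nat.sub_add_cancel (le_of_lt h)]
    apply noFix hirr hmono hper hrot hd (m := ℓ) (y₀ := F^[m] y)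
    rw [← hsplit]
    linarith

lemma rot_diff_ne_int (hirr : Irrational ρ) {n m : ℕ} (hnm : n ≠ m) (ℓ : ℤ) :
    (n:ℝ) * ρ - m * ρ ≠ ℓ := by
  intro hc
  rcases lt_or_gt_of_ne hnm with h | h
  · have : ((m - n : ℕ) : ℝ) * ρ = (-ℓ : ℤ) := by
      rw [Nat.cast_sub (le_of_lt h)]; push_cast; linarith
    exact irr_ne hirr (Nat.sub_pos_of_lt h) (-ℓ) this
  · have : ((n - m : ℕ) : ℝ) * ρ = (ℓ : ℤ) := by
      rw [Nat.cast_sub (le_of_lt h)]; push_cast; linarith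
    exact irr_ne hirr (Nat.sub_pos_of_lt h) ℓ this

lemma floor_diff_eq (hirr : Irrational ρ) (hmono : StrictMono F)
    (hcont : Continuous F) (hper : ∀ x, F (x + 1) = F x + 1)
    (hrot : Tendsto (fun n : ℕ => F^[n] 0 / n) atTop (𝓝 ρ)) {n m : ℕ} (hnm : n ≠ m) (y : ℝ) :
    ⌊F^[n] y - F^[m] y⌋ = ⌊(n:ℝ) * ρ - m * ρ⌋ := by
  set ℓ := ⌊(n:ℝ) * ρ - m * ρ⌋ with hℓ
  have h1 : (ℓ:ℝ) ≤ (n:ℝ) * ρ - m * ρ := Int.floor_le _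
  have h2 : (n:ℝ) * ρ - m * ρ < ℓ + 1 := Int.lt_floor_add_one _
  have hc := cmp2 hirr hmono hcont hper hrot n m ℓ y
  have hc1 := cmp2 hirr hmono hcont hper hrot n m (ℓ+1) y
  apply Int.floor_eq_iff.2
  constructor
  · by_contra hcon
    push_neg at hcon
    have := (hc.1).1 hcon
    linarith
  · have := (hc1.1).2 (by push_cast; linarith)
    push_cast at this
    linarith
end diff


/-- numerators of the convergents -/
def pnum (a : ℕ → ℕ) : ℕ → ℕ
  | 0 => 0
  | 1 => 1
  | (k+2) => a (k+1) * pnum a (k+1) + pnum a k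

noncomputable def beta (ρ : ℝ) (a qd : ℕ → ℕ) (k : ℕ) : ℝ :=
  (-1:ℝ)^k * ((qd k : ℝ) * ρ - (pnum a k : ℝ))

section cf
variable {ρ : ℝ} {a qd : ℕ → ℕ}

lemma gauss_iter_mem (hirr : Irrational ρ) (hρ : ρ ∈ Set.Ioo (0:ℝ) 1) :
    ∀ j, Irrational (gauss^[j] ρ) ∧ gauss^[j] ρ ∈ Set.Ioo (0:ℝ) 1 := by
  intro j
  induction j with
  | zero => exact ⟨hirr, hρ⟩
  | succ i ih =>
      obtain ⟨hirr', ⟨h0, h1⟩⟩ := ih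
      rw [Function.iterate_succ_apply']
      set y := gauss^[i] ρ
      have hyne : y ≠ 0 := ne_of_gt h0
      have hinv : Irrational y⁻¹ := by
        intro ⟨q, hq⟩
        exact hirr' ⟨q⁻¹, by rw [Rat.cast_inv, hq, inv_inv]⟩
      have hgi : Irrational (gauss y) := by
        rw [show gauss y = y⁻¹ - ⌊y⁻¹⌋ from rfl]
        exact hinv.sub_intCast ⌊y⁻¹⌋
      constructor
      · exact hgi
      · constructor
        · rcases lt_or_eq_of_le (Int.fract_nonneg y⁻¹) with h | h
          · exact h
          · exfalso
            exact (hinv.sub_intCast ⌊y⁻¹⌋).ne_int 0 (by rw [Int.fract] at h; push_cast; linarith)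
        · exact Int.fract_lt_one _

lemma gauss_irr (hirr : Irrational ρ) (hρ : ρ ∈ Set.Ioo (0:ℝ) 1) (j : ℕ) :
    Irrational (gauss^[j] ρ) := (gauss_iter_mem hirr hρ j).1

lemma a_pos (hirr : Irrational ρ) (hρ : ρ ∈ Set.Ioo (0:ℝ) 1)
    (hdig : ∀ j, (a j : ℤ) = ⌊(gauss^[j] ρ)⁻¹⌋) (j : ℕ) : 1 ≤ a j := by
  have hmem := (gauss_iter_mem hirr hρ j).2
  have h1 : (1:ℝ) < (gauss^[j] ρ)⁻¹ := by
    rw [lt_inv_comm₀ (by norm_num) hmem.1]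
    simpa using hmem.2
  have : (1:ℤ) ≤ ⌊(gauss^[j] ρ)⁻¹⌋ := Int.le_floor.2 (by exact_mod_cast h1.le)
  have := hdig j ▸ this
  exact_mod_cast this

lemma q_pos (hq0 : qd 0 = 1) (hq1 : qd 1 = a 0)
    (hqrec : ∀ k, qd (k + 2) = a (k + 1) * qd (k + 1) + qd k) (ha : ∀ j, 1 ≤ a j) :
    ∀ k, 1 ≤ qd k := by
  have key : ∀ k, 1 ≤ qd k ∧ 1 ≤ qd (k+1) := by
    intro k
    induction k with
    | zero => exact ⟨by omega, by rw [hq1]; exact ha 0⟩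
    | succ i ih =>
        refine ⟨ih.2, ?_⟩
        rw [hqrec i]
        have := ha (i+1)
        nlinarith [ih.1, ih.2]
  exact fun k => (key k).1

lemma q_mono (hq0 : qd 0 = 1) (hq1 : qd 1 = a 0)
    (hqrec : ∀ k, qd (k + 2) = a (k + 1) * qd (k + 1) + qd k) (ha : ∀ j, 1 ≤ a j)
    {k : ℕ} (hk : 1 ≤ k) : qd k < qd (k+1) := by
  obtain ⟨l, rfl⟩ := Nat.exists_eq_add_of_le hk
  rw [add_comm] at *
  rw [hqrec l]
  have h1 := ha (l+1)
  have h2 := q_pos hq0 hq1 hqrec ha l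
  have h3 := q_pos hq0 hq1 hqrec ha (l+1)
  nlinarith

lemma q_mono' (hq0 : qd 0 = 1) (hq1 : qd 1 = a 0)
    (hqrec : ∀ k, qd (k + 2) = a (k + 1) * qd (k + 1) + qd k) (ha : ∀ j, 1 ≤ a j)
    (k : ℕ) : qd k ≤ qd (k+1) := by
  rcases Nat.eq_zero_or_pos k with rfl | hk
  · rw [hq0, hq1]; exact ha 0
  · exact le_of_lt (q_mono hq0 hq1 hqrec ha hk)

lemma beta_zero (hq0 : qd 0 = 1) : beta ρ a qd 0 = ρ := by
  simp [beta, pnum, hq0]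

lemma beta_rec (hqrec : ∀ k, qd (k + 2) = a (k + 1) * qd (k + 1) + qd k) (k : ℕ) :
    beta ρ a qd (k+2) = beta ρ a qd k - (a (k+1) : ℝ) * beta ρ a qd (k+1) := by
  simp only [beta, hqrec k, pnum]
  push_cast
  ring

lemma beta_prod (hirr : Irrational ρ) (hρ : ρ ∈ Set.Ioo (0:ℝ) 1)
    (hdig : ∀ j, (a j : ℤ) = ⌊(gauss^[j] ρ)⁻¹⌋)
    (hq0 : qd 0 = 1) (hq1 : qd 1 = a 0)
    (hqrec : ∀ k, qd (k + 2) = a (k + 1) * qd (k + 1) + qd k) :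
    ∀ k, beta ρ a qd (k+1) = beta ρ a qd k * gauss^[k+1] ρ := by
  intro k
  induction k with
  | zero =>
      have hρ0 : ρ ≠ 0 := ne_of_gt hρ.1
      have ha0 : ((a 0 : ℤ) : ℝ) = ⌊ρ⁻¹⌋ := by rw [hdig 0]; simp
      have hg : gauss^[1] ρ = ρ⁻¹ - (a 0 : ℝ) := by
        simp only [Function.iterate_one]
        rw [show gauss ρ = ρ⁻¹ - ⌊ρ⁻¹⌋ from rfl]
        push_cast at ha0 ⊢
        rw [← ha0]
      rw [hg, beta_zero hq0]
      simp only [beta, hq1, pnum]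
      push_cast
      field_simp
      ring
  | succ i ih =>
      have hx : gauss^[i+2] ρ = (gauss^[i+1] ρ)⁻¹ - (a (i+1) : ℝ) := by
        rw [Function.iterate_succ_apply', show gauss (gauss^[i+1] ρ) = (gauss^[i+1] ρ)⁻¹ - ⌊(gauss^[i+1] ρ)⁻¹⌋ from rfl]
        have := hdig (i+1)
        have : ((a (i+1) : ℤ) : ℝ) = (⌊(gauss^[i+1] ρ)⁻¹⌋ : ℝ) := by exact_mod_cast this
        push_cast at this ⊢
        rw [← this]
      have hxne : gauss^[i+1] ρ ≠ 0 := ne_of_gt (gauss_iter_mem hirr hρ (i+1)).2.1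
      have hxx : gauss^[i+1] ρ * (gauss^[i+1] ρ)⁻¹ = 1 := mul_inv_cancel₀ hxne
      rw [beta_rec hqrec, ih, hx]
      linear_combination (-(beta ρ a qd i)) * hxx

lemma beta_pos (hirr : Irrational ρ) (hρ : ρ ∈ Set.Ioo (0:ℝ) 1)
    (hdig : ∀ j, (a j : ℤ) = ⌊(gauss^[j] ρ)⁻¹⌋)
    (hq0 : qd 0 = 1) (hq1 : qd 1 = a 0)
    (hqrec : ∀ k, qd (k + 2) = a (k + 1) * qd (k + 1) + qd k) :
    ∀ k, 0 < beta ρ a qd k ∧ beta ρ a qd k < 1 := by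
  intro k
  induction k with
  | zero => rw [beta_zero hq0]; exact ⟨hρ.1, hρ.2⟩
  | succ i ih =>
      rw [beta_prod hirr hρ hdig hq0 hq1 hqrec i]
      have hx := (gauss_iter_mem hirr hρ (i+1)).2
      constructor
      · exact mul_pos ih.1 hx.1
      · nlinarith [ih.1, ih.2, hx.1, hx.2]

lemma beta_dec (hirr : Irrational ρ) (hρ : ρ ∈ Set.Ioo (0:ℝ) 1)
    (hdig : ∀ j, (a j : ℤ) = ⌊(gauss^[j] ρ)⁻¹⌋)
    (hq0 : qd 0 = 1) (hq1 : qd 1 = a 0)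
    (hqrec : ∀ k, qd (k + 2) = a (k + 1) * qd (k + 1) + qd k) (k : ℕ) :
    beta ρ a qd (k+1) < beta ρ a qd k := by
  rw [beta_prod hirr hρ hdig hq0 hq1 hqrec k]
  have hx := (gauss_iter_mem hirr hρ (k+1)).2
  have hb := beta_pos hirr hρ hdig hq0 hq1 hqrec k
  nlinarith [hb.1, hx.1, hx.2]

lemma beta_sum (hirr : Irrational ρ) (hρ : ρ ∈ Set.Ioo (0:ℝ) 1)
    (hdig : ∀ j, (a j : ℤ) = ⌊(gauss^[j] ρ)⁻¹⌋)
    (hq0 : qd 0 = 1) (hq1 : qd 1 = a 0)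
    (hqrec : ∀ k, qd (k + 2) = a (k + 1) * qd (k + 1) + qd k)
    {k : ℕ} (hk : 1 ≤ k) : beta ρ a qd k + beta ρ a qd (k+1) < 1 := by
  obtain ⟨l, rfl⟩ := Nat.exists_eq_add_of_le hk
  rw [add_comm 1 l] at *
  have hrec := beta_rec (ρ := ρ) hqrec l
  have ha : (1:ℝ) ≤ (a (l+1) : ℝ) := by
    exact_mod_cast a_pos hirr hρ hdig (l+1)
  have hb0 := beta_pos hirr hρ hdig hq0 hq1 hqrec l
  have hb1 := beta_pos hirr hρ hdig hq0 hq1 hqrec (l+1)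
  have hb2 := beta_pos hirr hρ hdig hq0 hq1 hqrec (l+2)
  nlinarith [hb0.2, hb1.1, hb2.1]

lemma det_eq (hq0 : qd 0 = 1) (hq1 : qd 1 = a 0)
    (hqrec : ∀ k, qd (k + 2) = a (k + 1) * qd (k + 1) + qd k) :
    ∀ k, (qd k : ℤ) * (pnum a (k+1) : ℤ) - (qd (k+1) : ℤ) * (pnum a k : ℤ) = (-1)^k := by
  intro k
  induction k with
  | zero => simp [hq0, hq1, pnum]
  | succ i ih =>
      rw [hqrec i, show pnum a (i+2) = a (i+1) * pnum a (i+1) + pnum a i from rfl]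
      push_cast
      push_cast at ih
      ring_nf
      ring_nf at ih
      linarith [ih]

lemma best_approx (hirr : Irrational ρ) (hρ : ρ ∈ Set.Ioo (0:ℝ) 1)
    (hdig : ∀ j, (a j : ℤ) = ⌊(gauss^[j] ρ)⁻¹⌋)
    (hq0 : qd 0 = 1) (hq1 : qd 1 = a 0)
    (hqrec : ∀ k, qd (k + 2) = a (k + 1) * qd (k + 1) + qd k)
    {k : ℕ} (hk : 1 ≤ k) {j : ℕ} (hj0 : 0 < j) (hjk : j < qd k) (m : ℤ) :
    beta ρ a qd k < |(j:ℝ) * ρ - m| := by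
  have ha := a_pos hirr hρ hdig
  obtain ⟨l, rfl⟩ := Nat.exists_eq_add_of_le hk
  rw [add_comm 1 l] at *
  set e : ℤ := (-1)^l with he
  have he2 : e * e = 1 := by
    rw [he, ← pow_add]
    exact Even.neg_one_pow ⟨l, by ring⟩
  have hdet := det_eq hq0 hq1 hqrec l
  rw [← he] at hdet
  set u : ℤ := e * ((j:ℤ) * pnum a (l+1) - m * qd (l+1)) with hu
  set v : ℤ := e * (m * qd l - (j:ℤ) * pnum a l) with hv
  have id1 : u * qd l + v * qd (l+1) = (j:ℤ) := by
    rw [hu, hv]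
    linear_combination ((e:ℤ) * j) * hdet + (j:ℤ) * he2
  have id2 : u * pnum a l + v * pnum a (l+1) = m := by
    rw [hu, hv]
    linear_combination ((e:ℤ) * m) * hdet + m * he2
  clear hu hv
  clear_value u v
  have c1 : ((u:ℝ)) * (qd l : ℝ) + (v:ℝ) * (qd (l+1) : ℝ) = (j:ℝ) := by
    exact_mod_cast congrArg (fun z : ℤ => (z : ℝ)) id1
  have c2 : ((u:ℝ)) * (pnum a l : ℝ) + (v:ℝ) * (pnum a (l+1) : ℝ) = (m:ℝ) := by
    exact_mod_cast congrArg (fun z : ℤ => (z : ℝ)) id2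
  set eR : ℝ := (-1)^l with heR
  have heR2 : eR * eR = 1 := by
    rw [heR, ← pow_add]
    exact Even.neg_one_pow ⟨l, by ring⟩
  have hbl : (qd l : ℝ) * ρ - pnum a l = eR * beta ρ a qd l := by
    rw [beta, ← heR]
    linear_combination (-((qd l : ℝ) * ρ - pnum a l)) * heR2
  have hbl1 : (qd (l+1) : ℝ) * ρ - pnum a (l+1) = -(eR * beta ρ a qd (l+1)) := by
    rw [beta]
    have hpow : ((-1:ℝ))^(l+1) = -eR := by rw [pow_succ, heR]; ring
    rw [hpow]
    linear_combination (-((qd (l+1) : ℝ) * ρ - pnum a (l+1))) * heR2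
  have idX : (j:ℝ) * ρ - m = eR * ((u:ℝ) * beta ρ a qd l - (v:ℝ) * beta ρ a qd (l+1)) := by
    have : (j:ℝ) * ρ - m = (u:ℝ) * ((qd l : ℝ) * ρ - pnum a l)
        + (v:ℝ) * ((qd (l+1) : ℝ) * ρ - pnum a (l+1)) := by
      linear_combination (-ρ) * c1 + c2
    rw [this, hbl, hbl1]; ring
  have habs : |(j:ℝ) * ρ - m| = |(u:ℝ) * beta ρ a qd l - (v:ℝ) * beta ρ a qd (l+1)| := by
    rw [idX, abs_mul, heR, abs_pow, abs_neg, abs_one, one_pow, one_mul]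
  rw [habs]
  clear_value e eR
  clear habs idX hbl hbl1 c1 c2 id2 hdet he2 heR2 he heR
  -- numeric facts
  have hb0 := beta_pos hirr hρ hdig hq0 hq1 hqrec l
  have hb1 := beta_pos hirr hρ hdig hq0 hq1 hqrec (l+1)
  have hdec := beta_dec hirr hρ hdig hq0 hq1 hqrec l
  have hql : (1:ℤ) ≤ qd l := by exact_mod_cast q_pos hq0 hq1 hqrec ha l
  have hql1 : (1:ℤ) ≤ qd (l+1) := by exact_mod_cast q_pos hq0 hq1 hqrec ha (l+1)
  have hjZ : (0:ℤ) < (j:ℤ) := by exact_mod_cast hj0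
  have hjkZ : (j:ℤ) < qd (l+1) := by exact_mod_cast hjk
  rw [lt_abs]
  have hQZ : (0:ℤ) ≤ qd (l+1) := by linarith
  have hqlZ : (0:ℤ) ≤ qd l := by linarith
  rcases lt_trichotomy v 0 with hvn | hvz | hvp
  · -- v ≤ -1 : u ≥ 1
    have hv1 : v ≤ -1 := by omega
    have hprod : 0 ≤ (-v - 1) * (qd (l+1):ℤ) := mul_nonneg (by linarith) hQZ
    have hul : 1 ≤ u * qd l := by nlinarith [id1]
    have hu1 : 1 ≤ u := by
      by_contra hc
      push_neg at hc
      have : u ≤ 0 := by omega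
      have : u * qd l ≤ 0 := mul_nonpos_iff.2 (Or.inr ⟨this, hqlZ⟩)
      omega
    left
    have huR : (1:ℝ) ≤ (u:ℝ) := by exact_mod_cast hu1
    have hvR : (v:ℝ) ≤ -1 := by exact_mod_cast hv1
    nlinarith [hb0.1, hb1.1, hdec, mul_nonneg (by linarith : (0:ℝ) ≤ (u:ℝ) - 1) hb0.1.le,
      mul_nonneg (by linarith : (0:ℝ) ≤ -(v:ℝ) - 1) hb1.1.le]
  · -- v = 0 : u ≥ 1
    have hjq : (j:ℤ) = u * qd l := by rw [← id1, hvz]; ring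
    have hu1 : 1 ≤ u := by
      by_contra hc
      push_neg at hc
      have : u ≤ 0 := by omega
      have : u * qd l ≤ 0 := mul_nonpos_iff.2 (Or.inr ⟨this, hqlZ⟩)
      omega
    left
    have huR : (1:ℝ) ≤ (u:ℝ) := by exact_mod_cast hu1
    rw [hvz]
    push_cast
    nlinarith [hb0.1, hb1.1, hdec, mul_nonneg (by linarith : (0:ℝ) ≤ (u:ℝ) - 1) hb0.1.le]
  · -- v ≥ 1 : u ≤ -1
    have hv1 : 1 ≤ v := by omega
    have hprod : 0 ≤ (v - 1) * (qd (l+1):ℤ) := mul_nonneg (by linarith) hQZ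
    have hul : u * qd l ≤ -1 := by nlinarith [id1]
    have hu1 : u ≤ -1 := by
      by_contra hc
      push_neg at hc
      have : 0 ≤ u := by omega
      have : 0 ≤ u * qd l := mul_nonneg this hqlZ
      omega
    right
    have huR : (u:ℝ) ≤ -1 := by exact_mod_cast hu1
    have hvR : (1:ℝ) ≤ (v:ℝ) := by exact_mod_cast hv1
    nlinarith [hb0.1, hb1.1, hdec, mul_nonneg (by linarith : (0:ℝ) ≤ -(u:ℝ) - 1) hb0.1.le,
      mul_nonneg (by linarith : (0:ℝ) ≤ (v:ℝ) - 1) hb1.1.le]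
end cf

-- arc lemmas

lemma coe_eq_iff (r s : ℝ) : ((r : ℝ) : AddCircle (1:ℝ)) = (s : ℝ) ↔ ∃ ℓ : ℤ, r - s = ℓ := by
  rw [QuotientAddGroup.eq_iff_sub_mem]
  constructor
  · rintro h
    rw [AddSubgroup.mem_zmultiples_iff] at h
    obtain ⟨n, hn⟩ := h
    exact ⟨n, by rw [← hn]; simp⟩
  · rintro ⟨ℓ, hℓ⟩
    rw [AddSubgroup.mem_zmultiples_iff]
    exact ⟨ℓ, by rw [hℓ]; simp⟩

lemma coe_fract (r : ℝ) : ((Int.fract r : ℝ) : AddCircle (1:ℝ)) = (r : ℝ) := by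
  rw [coe_eq_iff]
  exact ⟨-⌊r⌋, by rw [Int.fract]; push_cast; ring⟩



lemma mem_posArc_iff (u v w : ℝ) :
    ((w : ℝ) : AddCircle (1:ℝ)) ∈ posArc (u : ℝ) ((v : ℝ) : AddCircle (1:ℝ)) ↔
      Int.fract (w - u) ≤ Int.fract (v - u) := by
  constructor
  · rintro ⟨s, t, hs0, hst, ht1, hsc, htc⟩
    rw [← AddCircle.coe_sub, coe_eq_iff] at hsc htc
    obtain ⟨ℓ, hℓ⟩ := hsc
    obtain ⟨m, hm⟩ := htc
    have hs : s = Int.fract (w - u) := by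
      have : Int.fract s = s := Int.fract_eq_self.2 ⟨hs0, lt_of_le_of_lt hst ht1⟩
      rw [← this]
      have : s = (w - u) + ℓ := by linarith
      rw [this, Int.fract_add_intCast]
    have ht : t = Int.fract (v - u) := by
      have h0t : 0 ≤ t := le_trans hs0 hst
      have : Int.fract t = t := Int.fract_eq_self.2 ⟨h0t, ht1⟩
      rw [← this]
      have : t = (v - u) + m := by linarith
      rw [this, Int.fract_add_intCast]
    rw [← hs, ← ht]; exact hst
  · intro h
    exact ⟨Int.fract (w - u), Int.fract (v - u), Int.fract_nonneg _, h, Int.fract_lt_one _,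
      by rw [coe_fract, AddCircle.coe_sub], by rw [coe_fract, AddCircle.coe_sub]⟩


lemma fract_help (r : ℝ) (m : ℤ) (h0 : 0 ≤ r - m) (h1 : r - m < 1) : Int.fract r = r - m := by
  conv_lhs => rw [show r = (r - m) + m by ring]
  rw [Int.fract_add_intCast]
  exact Int.fract_eq_self.2 ⟨h0, h1⟩

lemma fract_eq_zero_int (r : ℝ) (h : Int.fract r = 0) : r = (⌊r⌋ : ℤ) := by
  have : r - ⌊r⌋ = 0 := h
  linarith

lemma orbit_lift (f : AddCircle (1:ℝ) → AddCircle (1:ℝ)) (F : ℝ → ℝ)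
    (hlift : ∀ x : ℝ, f ((x : ℝ) : AddCircle (1:ℝ)) = ((F x : ℝ) : AddCircle (1:ℝ)))
    (ξ : ℝ) : ∀ n : ℕ, f^[n] ((ξ : ℝ) : AddCircle (1:ℝ)) = ((F^[n] ξ : ℝ) : AddCircle (1:ℝ)) := by
  intro n
  induction n with
  | zero => simp
  | succ i ih =>
      rw [Function.iterate_succ_apply', Function.iterate_succ_apply', ih, hlift]

lemma orbit_mem (f : AddCircle (1:ℝ) → AddCircle (1:ℝ)) {F : ℝ → ℝ}
    (hlift : ∀ x : ℝ, f ((x : ℝ) : AddCircle (1:ℝ)) = ((F x : ℝ) : AddCircle (1:ℝ)))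
    {ρ : ℝ} (hirr : Irrational ρ) (hmono : StrictMono F) (hcont : Continuous F)
    (hper : ∀ x, F (x + 1) = F x + 1)
    (hrot : Tendsto (fun n : ℕ => F^[n] 0 / n) atTop (𝓝 ρ))
    (ξ : ℝ) {n aa bb : ℕ} (hna : n ≠ aa) (hnb : n ≠ bb) :
    (f^[n] ((ξ : ℝ) : AddCircle (1:ℝ)) ∈
      posArc (f^[aa] ((ξ : ℝ) : AddCircle (1:ℝ))) (f^[bb] ((ξ : ℝ) : AddCircle (1:ℝ)))) ↔
      Int.fract ((n:ℝ) * ρ - (aa:ℝ) * ρ) < Int.fract ((bb:ℝ) * ρ - (aa:ℝ) * ρ) := by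
  rw [orbit_lift f F hlift ξ n, orbit_lift f F hlift ξ aa, orbit_lift f F hlift ξ bb,
    mem_posArc_iff]
  have hdne : F^[n] ξ - F^[aa] ξ ≠ (⌊F^[n] ξ - F^[aa] ξ⌋ : ℤ) :=
    diff_ne_int hirr hmono hper hrot hna _ ξ
  rcases eq_or_ne bb aa with rfl | hba
  · -- both sides false
    simp only [sub_self, Int.fract_zero]
    constructor
    · intro h
      exfalso
      have h0 : Int.fract (F^[n] ξ - F^[bb] ξ) = 0 :=
        le_antisymm h (Int.fract_nonneg _)
      exact hdne (fract_eq_zero_int _ h0)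
    · intro h
      exfalso
      exact absurd h (not_lt.2 (Int.fract_nonneg _))
  · -- main case
    have hfa := floor_diff_eq hirr hmono hcont hper hrot hna ξ
    have hfb := floor_diff_eq hirr hmono hcont hper hrot hba ξ
    have hcmp := cmp2 hirr hmono hcont hper hrot n bb
      (⌊(n:ℝ) * ρ - (aa:ℝ) * ρ⌋ - ⌊(bb:ℝ) * ρ - (aa:ℝ) * ρ⌋) ξ
    have hne2 : F^[n] ξ - F^[bb] ξ ≠
        ((⌊(n:ℝ) * ρ - (aa:ℝ) * ρ⌋ - ⌊(bb:ℝ) * ρ - (aa:ℝ) * ρ⌋ : ℤ) : ℝ) :=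
      diff_ne_int hirr hmono hper hrot hnb _ ξ
    simp only [Int.fract] at *
    rw [hfa, hfb]
    push_cast at hcmp hne2 ⊢
    constructor
    · intro h
      have hlt : F^[n] ξ - F^[bb] ξ <
          (⌊(n:ℝ) * ρ - (aa:ℝ) * ρ⌋ : ℝ) - (⌊(bb:ℝ) * ρ - (aa:ℝ) * ρ⌋ : ℝ) := by
        rcases lt_or_eq_of_le (show F^[n] ξ - F^[bb] ξ ≤
            (⌊(n:ℝ) * ρ - (aa:ℝ) * ρ⌋ : ℝ) - (⌊(bb:ℝ) * ρ - (aa:ℝ) * ρ⌋ : ℝ) by linarith)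
          with h' | h'
        · exact h'
        · exact absurd h' hne2
      have := hcmp.1.1 (by push_cast; linarith)
      push_cast at this
      linarith
    · intro h
      have := hcmp.1.2 (by push_cast; linarith)
      push_cast at this
      linarith

/-- for an orientation-preserving circle homeomorphism `f` with irrational
rotation number `ρ` with convergent denominators `qd k`, the iterate `f^[qd k]` is a
closest return: for every `x` and every `0 < j < qd k`, the point `f^[j] x` does not lie
in the closed arc `A` between `x` and `f^[qd k] x` not containing `f^[qd (k+1)] x`. -/
theorem closest_returns (f : AddCircle (1:ℝ) → AddCircle (1:ℝ)) (F : ℝ → ℝ)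
    (hlift : ∀ x : ℝ, f ((x : ℝ) : AddCircle (1:ℝ)) = ((F x : ℝ) : AddCircle (1:ℝ)))
    (hmono : StrictMono F) (hcont : Continuous F) (hsurj : Function.Surjective F)
    (hper : ∀ x, F (x + 1) = F x + 1)
    (ρ : ℝ) (hirr : Irrational ρ) (hρ : ρ ∈ Set.Ioo (0:ℝ) 1)
    (hrot : Tendsto (fun n : ℕ => F^[n] 0 / n) atTop (𝓝 ρ))
    (a qd : ℕ → ℕ)
    (hdig : ∀ j, (a j : ℤ) = ⌊(gauss^[j] ρ)⁻¹⌋)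
    (hq0 : qd 0 = 1) (hq1 : qd 1 = a 0)
    (hqrec : ∀ k, qd (k + 2) = a (k + 1) * qd (k + 1) + qd k)
    (k : ℕ) (x : AddCircle (1:ℝ)) (A : Set (AddCircle (1:ℝ)))
    (hA : A = posArc x (f^[qd k] x) ∨ A = posArc (f^[qd k] x) x)
    (hAnot : f^[qd (k + 1)] x ∉ A) :
    ∀ j, 0 < j → j < qd k → f^[j] x ∉ A := by
  intro j hj0 hjk hjA
  -- k ≥ 1
  have ha := a_pos hirr hρ hdig
  have hqpos := q_pos hq0 hq1 hqrec ha
  have hk1 : 1 ≤ k := by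
    rcases Nat.eq_zero_or_pos k with rfl | h
    · omega
    · exact h
  -- lift of x
  obtain ⟨ξ, rfl⟩ : ∃ ξ : ℝ, ((ξ : ℝ) : AddCircle (1:ℝ)) = x := by
    induction x using QuotientAddGroup.induction_on with
    | H z => exact ⟨z, rfl⟩
  -- abbreviations
  have hQq : qd (k+1) ≠ qd k := (q_mono hq0 hq1 hqrec ha hk1).ne'
  have hQ0 : qd (k+1) ≠ 0 := by have := hqpos (k+1); omega
  have hq0' : qd k ≠ 0 := by have := hqpos k; omega
  have hjq : j ≠ qd k := Nat.ne_of_lt hjk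
  have hj0' : j ≠ 0 := Nat.pos_iff_ne_zero.1 hj0
  have hb := beta_pos hirr hρ hdig hq0 hq1 hqrec k
  have hb' := beta_pos hirr hρ hdig hq0 hq1 hqrec (k+1)
  have hsum := beta_sum hirr hρ hdig hq0 hq1 hqrec hk1
  set e : ℝ := beta ρ a qd k with he
  set e' : ℝ := beta ρ a qd (k+1) with he'
  have hOM := fun {n aa bb : ℕ} (hna : n ≠ aa) (hnb : n ≠ bb) =>
    orbit_mem f hlift hirr hmono hcont hper hrot ξ hna hnb
  have hx0 : ((ξ : ℝ) : AddCircle (1:ℝ)) = f^[0] ((ξ : ℝ) : AddCircle (1:ℝ)) := rfl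
  rcases Nat.even_or_odd k with hke | hko
  · -- k even
    have hpow : ((-1:ℝ))^k = 1 := Even.neg_one_pow hke
    have hqρ : (qd k : ℝ) * ρ = (pnum a k : ℝ) + e := by
      rw [he, beta, hpow]; ring
    have hpow' : ((-1:ℝ))^(k+1) = -1 := by rw [pow_succ, hpow]; ring
    have hQρ : (qd (k+1) : ℝ) * ρ = (pnum a (k+1) : ℝ) - e' := by
      rw [he', beta, hpow']; ring
    rcases hA with rfl | rfl
    · -- A = posArc x (f^[q] x) : show f^[j] x ∉ A directly
      rw [hx0] at hjA
      have hmem := (hOM hj0' hjq).1 hjA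
      simp only [Nat.cast_zero, zero_mul, sub_zero] at hmem
      have hfq : Int.fract ((qd k : ℝ) * ρ) = e := by
        rw [fract_help _ ((pnum a k : ℤ)) (by push_cast; rw [hqρ]; linarith [hb.1])
          (by push_cast; rw [hqρ]; linarith [hb.2])]
        push_cast
        rw [hqρ]
        ring
      have hBA := best_approx hirr hρ hdig hq0 hq1 hqrec hk1 hj0 hjk ⌊(j:ℝ) * ρ⌋
      rw [← he] at hBA
      have : |(j:ℝ) * ρ - ⌊(j:ℝ) * ρ⌋| = Int.fract ((j:ℝ) * ρ) :=
        abs_of_nonneg (Int.fract_nonneg _)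
      rw [this] at hBA
      rw [hfq] at hmem
      linarith [hBA, hmem]
    · -- A = posArc (f^[q] x) x : show f^[Q] x ∈ A
      apply hAnot
      rw [hx0]
      apply (hOM hQq hQ0).2
      have h1 : Int.fract ((qd (k+1) : ℝ) * ρ - (qd k : ℝ) * ρ) = 1 - e - e' := by
        rw [fract_help _ ((pnum a (k+1) : ℤ) - (pnum a k) - 1) (by push_cast; rw [hQρ, hqρ]; linarith [hsum])
          (by push_cast; rw [hQρ, hqρ]; linarith [hb.1, hb'.1])]
        push_cast
        rw [hQρ, hqρ]
        ring
      have h2 : Int.fract ((0:ℝ) * ρ - (qd k : ℝ) * ρ) = 1 - e := by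
        rw [fract_help _ (-(pnum a k : ℤ) - 1) (by push_cast; rw [hqρ]; linarith [hb.2])
          (by push_cast; rw [hqρ]; linarith [hb.1])]
        push_cast
        rw [hqρ]
        ring
      rw [show ((0:ℕ):ℝ) = (0:ℝ) by norm_num] at *
      rw [h1, h2]
      linarith [hb'.1]
  · -- k odd
    have hpow : ((-1:ℝ))^k = -1 := Odd.neg_one_pow hko
    have hqρ : (qd k : ℝ) * ρ = (pnum a k : ℝ) - e := by
      rw [he, beta, hpow]; ring
    have hpow' : ((-1:ℝ))^(k+1) = 1 := by rw [pow_succ, hpow]; ring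
    have hQρ : (qd (k+1) : ℝ) * ρ = (pnum a (k+1) : ℝ) + e' := by
      rw [he', beta, hpow']; ring
    rcases hA with rfl | rfl
    · -- A = posArc x (f^[q] x) : show f^[Q] x ∈ A
      apply hAnot
      rw [hx0]
      apply (hOM hQ0 hQq).2
      simp only [Nat.cast_zero, zero_mul, sub_zero]
      have h1 : Int.fract ((qd (k+1) : ℝ) * ρ) = e' := by
        rw [fract_help _ ((pnum a (k+1) : ℤ)) (by push_cast; rw [hQρ]; linarith [hb'.1])
          (by push_cast; rw [hQρ]; linarith [hb'.2])]
        push_cast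
        rw [hQρ]
        ring
      have h2 : Int.fract ((qd k : ℝ) * ρ) = 1 - e := by
        rw [fract_help _ ((pnum a k : ℤ) - 1) (by push_cast; rw [hqρ]; linarith [hb.2])
          (by push_cast; rw [hqρ]; linarith [hb.1])]
        push_cast
        rw [hqρ]
        ring
      rw [h1, h2]
      linarith [hsum]
    · -- A = posArc (f^[q] x) x : f^[j] x ∈ A gives contradiction
      rw [hx0] at hjA
      have hmem := (hOM hjq hj0').1 hjA
      have h2 : Int.fract ((0:ℕ) * ρ - (qd k : ℝ) * ρ) = e := by
        rw [fract_help _ (-(pnum a k : ℤ)) (by push_cast; rw [hqρ]; linarith [hb.1])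
          (by push_cast; rw [hqρ]; linarith [hb.2])]
        push_cast
        rw [hqρ]
        ring
      rw [h2] at hmem
      set m0 : ℤ := ⌊(j:ℝ) * ρ - (qd k : ℝ) * ρ⌋ with hm0
      have hfr : Int.fract ((j:ℝ) * ρ - (qd k : ℝ) * ρ)
          = (j:ℝ) * ρ - (qd k : ℝ) * ρ - m0 := rfl
      have hfr0 : 0 ≤ (j:ℝ) * ρ - (qd k : ℝ) * ρ - m0 := by
        rw [← hfr]; exact Int.fract_nonneg _
      have hfre : (j:ℝ) * ρ - (qd k : ℝ) * ρ - m0 < e := by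
        rw [← hfr]; exact hmem
      have hBA := best_approx hirr hρ hdig hq0 hq1 hqrec hk1 hj0 hjk (m0 + (pnum a k : ℤ))
      rw [← he] at hBA
      have habs : |(j:ℝ) * ρ - ((m0 + (pnum a k : ℤ) : ℤ) : ℝ)| ≤ e := by
        rw [abs_le]
        constructor
        · push_cast; rw [hqρ] at hfr0 hfre; linarith
        · push_cast; rw [hqρ] at hfr0 hfre; linarith
      linarith [hBA, habs]
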